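/- Let b : T × T → ℚ/ℤ be a symmetric bilinear form on a finite abelian group T. Then there exists a function ψ : T → ℚ/ℤ with ψ(x+y) − ψ(x) − ψ(y) = b(x,y) for all x,y (an enhancement of b). -/

import Mathlib

namespace EnhAux

universe u

open CategoryTheory

variable {T : Type u} [AddCommGroup T]

/-- The underlying type of the central extension of `T` by `ℚ/ℤ` with cocycle `c`. -/
def E (_c : T → T → AddCircle (1 : ℚ)) : Type u :=
  ULift.{u} (AddCircle (1 : ℚ)) × T

variable (c : T → T → AddCircle (1 : ℚ))

instance : Zero (E c) := ⟨((0 : ULift (AddCircle (1 : ℚ))), (0 : T))⟩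

instance : Add (E c) :=
  ⟨fun p q => (p.1 + q.1 + ULift.up (c p.2 q.2), p.2 + q.2)⟩

instance : Neg (E c) :=
  ⟨fun p => (-p.1 - ULift.up (c p.2 (-p.2)), -p.2)⟩

lemma add_def (p q : E c) :
    p + q = (p.1 + q.1 + ULift.up (c p.2 q.2), p.2 + q.2) := rfl

lemma fst_down_add (p q : E c) :
    (p + q).1.down = p.1.down + q.1.down + c p.2 q.2 := rfl

/-- The twisted additive group structure on the extension. -/
def extGroup (hsymm : ∀ x y, c x y = c y x)
    (h0 : ∀ x, c 0 x = 0)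
    (hcoc : ∀ x y z, c x y + c (x + y) z = c y z + c x (y + z)) :
    AddCommGroup (E c) where
  add := (· + ·)
  zero := 0
  neg := Neg.neg
  add_assoc p q r := by
    refine Prod.ext (ULift.ext _ _ ?_) (add_assoc _ _ _)
    show p.1.down + q.1.down + c p.2 q.2 + r.1.down + c (p.2 + q.2) r.2
        = p.1.down + (q.1.down + r.1.down + c q.2 r.2) + c p.2 (q.2 + r.2)
    calc p.1.down + q.1.down + c p.2 q.2 + r.1.down + c (p.2 + q.2) r.2
        = p.1.down + q.1.down + r.1.down + (c p.2 q.2 + c (p.2 + q.2) r.2) := by abel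
      _ = p.1.down + q.1.down + r.1.down + (c q.2 r.2 + c p.2 (q.2 + r.2)) := by
          rw [hcoc]
      _ = p.1.down + (q.1.down + r.1.down + c q.2 r.2) + c p.2 (q.2 + r.2) := by abel
  zero_add p := by
    refine Prod.ext (ULift.ext _ _ ?_) (zero_add _)
    show 0 + p.1.down + c 0 p.2 = p.1.down
    rw [h0]; abel
  add_zero p := by
    refine Prod.ext (ULift.ext _ _ ?_) (add_zero _)
    show p.1.down + 0 + c p.2 0 = p.1.down
    rw [hsymm, h0]; abel
  neg_add_cancel p := by
    refine Prod.ext (ULift.ext _ _ ?_) (neg_add_cancel _)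
    show -p.1.down - c p.2 (-p.2) + p.1.down + c (-p.2) p.2 = 0
    rw [hsymm (-p.2) p.2]; abel
  add_comm p q := by
    refine Prod.ext (ULift.ext _ _ ?_) (add_comm _ _)
    show p.1.down + q.1.down + c p.2 q.2 = q.1.down + p.1.down + c q.2 p.2
    rw [hsymm p.2 q.2]; abel
  nsmul := nsmulRec
  zsmul := zsmulRec

end EnhAux

/-- Every symmetric bilinear form `b : T × T → ℚ/ℤ` on a finite abelian group
has an enhancement `ψ` with `ψ(x+y) - ψ(x) - ψ(y) = b(x,y)`. -/
theorem exists_enhancement {T : Type*} [AddCommGroup T] [Finite T]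
    (b : T → T → AddCircle (1 : ℚ))
    (hsymm : ∀ x y, b x y = b y x)
    (hadd₁ : ∀ x y z, b (x + y) z = b x z + b y z)
    (hadd₂ : ∀ x y z, b x (y + z) = b x y + b x z) :
    ∃ ψ : T → AddCircle (1 : ℚ), ∀ x y, ψ (x + y) - ψ x - ψ y = b x y := by
  classical
  open CategoryTheory in
  set c : T → T → AddCircle (1 : ℚ) := fun x y => -(b x y) with hc
  have hb0 : ∀ x : T, b 0 x = 0 := by
    intro x
    have := hadd₁ 0 0 x
    simpa using this
  have hcsymm : ∀ x y, c x y = c y x := fun x y => by simp [hc, hsymm x y]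
  have hc0 : ∀ x, c 0 x = 0 := fun x => by simp [hc, hb0 x]
  have hccoc : ∀ x y z, c x y + c (x + y) z = c y z + c x (y + z) := by
    intro x y z
    simp only [hc, hadd₁, hadd₂]
    abel
  letI inst : AddCommGroup (EnhAux.E c) := EnhAux.extGroup c hcsymm hc0 hccoc
  -- the inclusion of `ℚ/ℤ` into the extension
  let iHom : ULift.{_} (AddCircle (1 : ℚ)) →+ EnhAux.E c :=
    { toFun := fun a => ((a, 0) : EnhAux.E c)
      map_zero' := rfl
      map_add' := by
        intro a a'
        refine Prod.ext (ULift.ext _ _ ?_) ?_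
        · show (a + a').down = a.down + a'.down + c 0 0
          rw [hc0]
          show (a + a').down = a.down + a'.down + 0
          rw [add_zero]; rfl
        · show (0 : T) = 0 + 0
          rw [add_zero] }
  let i : AddCommGrpCat.of (ULift.{_} (AddCircle (1 : ℚ))) ⟶ AddCommGrpCat.of (EnhAux.E c) :=
    AddCommGrpCat.ofHom iHom
  haveI : Mono i := by
    rw [AddCommGrpCat.mono_iff_injective]
    intro a a' h
    exact congrArg Prod.fst h
  let r := Injective.factorThru (𝟙 (AddCommGrpCat.of (ULift.{_} (AddCircle (1 : ℚ))))) i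
  let r' : EnhAux.E c →+ ULift.{_} (AddCircle (1 : ℚ)) := r.hom
  have hri : ∀ a, r' (iHom a) = a := by
    intro a
    have h := Injective.comp_factorThru (𝟙 (AddCommGrpCat.of (ULift.{_} (AddCircle (1 : ℚ))))) i
    calc r' (iHom a) = (i ≫ r) a := rfl
    _ = a := by rw [h]; rfl
  let e : T → EnhAux.E c := fun x => ((0, x) : EnhAux.E c)
  refine ⟨fun x => (r' (e x)).down, ?_⟩
  intro x y
  let u : EnhAux.E c := ((ULift.up (c x y), 0) : EnhAux.E c)
  have key : e x + e y = u + e (x + y) := by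
    refine Prod.ext (ULift.ext _ _ ?_) ?_
    · show (0 : AddCircle (1:ℚ)) + 0 + c x y = c x y + 0 + c 0 (x + y)
      rw [hc0]; abel
    · show x + y = 0 + (x + y)
      rw [zero_add]
  have hmap : r' (e x + e y) = r' (e x) + r' (e y) := AddMonoidHom.map_add r' (e x) (e y)
  rw [key, show r' (u + e (x + y)) = r' u + r' (e (x + y)) from AddMonoidHom.map_add r' u (e (x + y))] at hmap
  have h2 : r' u = ULift.up (c x y) := hri (ULift.up (c x y))
  rw [h2] at hmap
  have hdown : c x y + (r' (e (x + y))).down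
      = (r' (e x)).down + (r' (e y)).down := by
    have := congrArg ULift.down hmap
    simpa using this
  have hb : c x y = -(b x y) := rfl
  rw [hb] at hdown
  show (r' (e (x + y))).down - (r' (e x)).down - (r' (e y)).down = b x y
  rw [sub_sub, ← hdown]
  abel
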